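/- Let H₁ and H₂ be disjoint compact convex subsets of the plane ℝ² = ℝ × ℝ, each with nonempty interior. Then the set of lines that support both H₁ and H₂ has exactly four elements, i.e., {L : Set (ℝ × ℝ) | L supports H₁ and L supports H₂} has cardinality 4. -/

import Mathlib

open Set

/-- `L` is a (non-directed) supporting line of `H ⊆ ℝ²`: for some `a ≠ 0` and `c`,
`L = {x : a·x = c}`, `H ⊆ {x : a·x ≤ c}`, and `L` meets `H`. -/
def IsSupportingLine (L H : Set (ℝ × ℝ)) : Prop :=
  ∃ (a : ℝ × ℝ) (c : ℝ), a ≠ 0 ∧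
    L = {x : ℝ × ℝ | a.1 * x.1 + a.2 * x.2 = c} ∧
    (∀ x ∈ H, a.1 * x.1 + a.2 * x.2 ≤ c) ∧
    (L ∩ H).Nonempty

namespace FourTangentsAux

noncomputable section
set_option maxHeartbeats 1000000

def fdot (a x : ℝ × ℝ) : ℝ := a.1 * x.1 + a.2 * x.2
def fspt (H : Set (ℝ × ℝ)) (a : ℝ × ℝ) : ℝ := sSup ((fun x => fdot a x) '' H)
def fcross (a b : ℝ × ℝ) : ℝ := a.1 * b.2 - a.2 * b.1

lemma fdot_cont (a : ℝ × ℝ) : Continuous (fun x => fdot a x) := by unfold fdot; fun_prop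

lemma fdot_neg (a x : ℝ × ℝ) : fdot (-a) x = -fdot a x := by
  simp only [fdot, Prod.fst_neg, Prod.snd_neg]; ring

lemma fspt_le {H : Set (ℝ × ℝ)} (hc : IsCompact H) {x : ℝ × ℝ} (hx : x ∈ H) (a : ℝ × ℝ) :
    fdot a x ≤ fspt H a :=
  le_csSup (hc.bddAbove_image (fdot_cont a).continuousOn) (Set.mem_image_of_mem _ hx)

lemma fspt_mem {H : Set (ℝ × ℝ)} (hc : IsCompact H) (hne : H.Nonempty) (a : ℝ × ℝ) :
    ∃ x ∈ H, fdot a x = fspt H a := by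
  obtain ⟨x, hx, hx2⟩ := hc.exists_sSup_image_eq hne (fdot_cont a).continuousOn
  exact ⟨x, hx, hx2.symm⟩

lemma fspt_eq {H : Set (ℝ × ℝ)} (hc : IsCompact H) {a : ℝ × ℝ} {c : ℝ}
    (h1 : ∀ x ∈ H, fdot a x ≤ c) (h2 : ∃ x ∈ H, fdot a x = c) : fspt H a = c := by
  obtain ⟨x, hx, hxc⟩ := h2
  refine le_antisymm (csSup_le (Set.Nonempty.image _ ⟨x, hx⟩) ?_) ?_
  · rintro y ⟨z, hz, rfl⟩; exact h1 z hz
  · rw [← hxc]; exact fspt_le hc hx a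

lemma nsq_pos {a : ℝ × ℝ} (ha : a ≠ 0) : 0 < a.1^2 + a.2^2 := by
  have : a.1 ≠ 0 ∨ a.2 ≠ 0 := by
    by_contra hcon; push_neg at hcon; exact ha (Prod.ext hcon.1 hcon.2)
  rcases this with h | h <;> positivity

lemma unit_ne_zero {a : ℝ × ℝ} (ha : a.1^2 + a.2^2 = 1) : a ≠ 0 := by
  intro h0
  rw [h0] at ha
  norm_num at ha

lemma width_pos {H : Set (ℝ × ℝ)} (hc : IsCompact H) (hi : (interior H).Nonempty)
    {a : ℝ × ℝ} (ha : a ≠ 0) : 0 < fspt H a + fspt H (-a) := by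
  obtain ⟨z, hz⟩ := hi
  obtain ⟨ε, hε, hball⟩ := Metric.mem_nhds_iff.mp (mem_interior_iff_mem_nhds.mp hz)
  have hn : 0 < a.1^2 + a.2^2 := nsq_pos ha
  set C : ℝ := |a.1| + |a.2| + 1 with hC
  have hCpos : 0 < C := by positivity
  set t : ℝ := ε / (2 * C) with ht
  have htpos : 0 < t := by positivity
  have hmem : ∀ s : ℝ, |s| ≤ t → z + s • a ∈ H := by
    intro s hs
    apply hball
    have key : ∀ b : ℝ, |b| ≤ C → |s * b| < ε := by
      intro b hb
      rw [abs_mul]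
      calc |s| * |b| ≤ t * C := by
            apply mul_le_mul hs hb (abs_nonneg _) (le_of_lt htpos)
        _ = ε / 2 := by rw [ht]; field_simp
        _ < ε := by linarith
    have hb1 : |a.1| ≤ C := by rw [hC]; nlinarith [abs_nonneg a.2]
    have hb2 : |a.2| ≤ C := by rw [hC]; nlinarith [abs_nonneg a.1]
    have h1 : dist (z + s • a).1 z.1 < ε := by
      simp only [Prod.fst_add, Prod.smul_fst, smul_eq_mul, Real.dist_eq, add_sub_cancel_left]
      exact key _ hb1
    have h2 : dist (z + s • a).2 z.2 < ε := by
      simp only [Prod.snd_add, Prod.smul_snd, smul_eq_mul, Real.dist_eq, add_sub_cancel_left]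
      exact key _ hb2
    rw [Metric.mem_ball, Prod.dist_eq]
    exact max_lt h1 h2
  have hp := fspt_le hc (hmem t (by rw [abs_of_pos htpos])) a
  have hq := fspt_le hc (hmem (-t) (by rw [abs_neg, abs_of_pos htpos])) (-a)
  unfold fdot at hp hq
  simp only [Prod.fst_add, Prod.snd_add, Prod.smul_fst, Prod.smul_snd, smul_eq_mul,
    Prod.fst_neg, Prod.snd_neg] at hp hq
  nlinarith [hp, hq]

lemma line_eq_iff {a b : ℝ × ℝ} {c d : ℝ} (ha : a ≠ 0) (hb : b ≠ 0)
    (h : {x : ℝ × ℝ | fdot a x = c} = {x : ℝ × ℝ | fdot b x = d}) :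
    ∃ l : ℝ, l ≠ 0 ∧ b = l • a ∧ d = l * c := by
  have hn : 0 < a.1^2 + a.2^2 := nsq_pos ha
  set n := a.1^2 + a.2^2 with hndef
  have hx0 : fdot a ((c/n) • a) = c := by
    simp only [fdot, Prod.smul_fst, Prod.smul_snd, smul_eq_mul]
    field_simp; ring
  have hx0' : fdot b ((c/n) • a) = d := (Set.ext_iff.mp h _).mp hx0
  have hx1 : fdot a ((c/n) • a + (-a.2, a.1)) = c := by
    simp only [fdot, Prod.fst_add, Prod.snd_add, Prod.smul_fst, Prod.smul_snd, smul_eq_mul]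
    field_simp; ring
  have hx1' : fdot b ((c/n) • a + (-a.2, a.1)) = d := (Set.ext_iff.mp h _).mp hx1
  have hcross : b.1 * a.2 - b.2 * a.1 = 0 := by
    simp only [fdot, Prod.fst_add, Prod.snd_add, Prod.smul_fst, Prod.smul_snd,
      smul_eq_mul] at hx0' hx1'
    linarith [hx0', hx1']
  have hd : d * n = (a.1 * b.1 + a.2 * b.2) * c := by
    simp only [fdot, Prod.smul_fst, Prod.smul_snd, smul_eq_mul] at hx0'
    field_simp at hx0'
    linear_combination -hx0'
  refine ⟨(a.1 * b.1 + a.2 * b.2) / n, ?_, ?_, ?_⟩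
  · intro h0
    rw [div_eq_zero_iff] at h0
    rcases h0 with h0 | h0
    · have e1 : b.1 * n = 0 := by linear_combination a.1 * h0 + a.2 * hcross
      have e2 : b.2 * n = 0 := by linear_combination a.2 * h0 - a.1 * hcross
      exact hb (Prod.ext (by simpa [hn.ne'] using mul_eq_zero.mp e1)
        (by simpa [hn.ne'] using mul_eq_zero.mp e2))
    · linarith
  · apply Prod.ext
    · show b.1 = (a.1 * b.1 + a.2 * b.2) / n * a.1
      rw [div_mul_eq_mul_div, eq_div_iff hn.ne']
      linear_combination a.2 * hcross
    · show b.2 = (a.1 * b.1 + a.2 * b.2) / n * a.2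
      rw [div_mul_eq_mul_div, eq_div_iff hn.ne']
      linear_combination (-a.1) * hcross
  · rw [div_mul_eq_mul_div, eq_div_iff hn.ne']
    linear_combination hd

lemma cross_eq_zero {a b : ℝ × ℝ} (ha : a.1^2 + a.2^2 = 1) (hb : b.1^2 + b.2^2 = 1)
    (h : fcross a b = 0) : b = a ∨ b = -a := by
  simp only [fcross] at h
  have hcomp1 : b.1 = (a.1*b.1 + a.2*b.2) * a.1 := by
    linear_combination (-b.1) * ha + (-a.2) * h
  have hcomp2 : b.2 = (a.1*b.1 + a.2*b.2) * a.2 := by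
    linear_combination (-b.2) * ha + a.1 * h
  set c := a.1*b.1 + a.2*b.2 with hc
  have hc2 : (c - 1) * (c + 1) = 0 := by
    rw [hc]
    linear_combination (a.1^2+a.2^2) * hb + ha - (a.1*b.2 - a.2*b.1) * h
  rcases mul_eq_zero.mp hc2 with h1 | h1
  · left
    have : c = 1 := by linarith
    exact Prod.ext (by rw [hcomp1, this, one_mul]) (by rw [hcomp2, this, one_mul])
  · right
    have : c = -1 := by linarith
    exact Prod.ext (by rw [hcomp1, this]; simp) (by rw [hcomp2, this]; simp)

lemma fdot_add_smul (v p w : ℝ × ℝ) (t : ℝ) :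
    fdot v (p + t • w) = fdot v p + t * fdot v w := by
  simp only [fdot, Prod.fst_add, Prod.snd_add, Prod.smul_fst, Prod.smul_snd, smul_eq_mul]; ring

lemma decomp {a x p : ℝ × ℝ} (ha : a.1^2 + a.2^2 = 1)
    (h : fdot a x = fdot a p) :
    x = p + (fdot (-a.2, a.1) (x - p)) • ((-a.2, a.1) : ℝ × ℝ) := by
  simp only [fdot, Prod.fst_sub, Prod.snd_sub] at h ⊢
  apply Prod.ext <;>
    simp only [Prod.fst_add, Prod.snd_add, Prod.smul_fst, Prod.smul_snd, smul_eq_mul]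
  · linear_combination a.1 * h - (x.1 - p.1) * ha
  · linear_combination a.2 * h - (x.2 - p.2) * ha

lemma line_inter {a b : ℝ × ℝ} {c₁ c₂ : ℝ} (hq : fcross a b ≠ 0) :
    ∃ p : ℝ × ℝ, fdot a p = c₁ ∧ fdot b p = c₂ := by
  refine ⟨((c₁ * b.2 - c₂ * a.2) / fcross a b, (c₂ * a.1 - c₁ * b.1) / fcross a b), ?_, ?_⟩ <;>
  · simp only [fdot, fcross] at *
    rw [mul_div_assoc', mul_div_assoc', ← add_div, div_eq_iff hq]
    ring

lemma inner_aux {u a b : ℝ × ℝ} {m M c₁ c₂ : ℝ} {x₂ y₂ : ℝ × ℝ}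
    (hb : b.1^2 + b.2^2 = 1) (hMm : M < m)
    (hq : 0 < fcross a b * fcross u b)
    (hx2m : m ≤ fdot u x₂) (hy2M : fdot u y₂ ≤ M)
    (hbx : fdot b x₂ = c₂) (hby : fdot b y₂ = c₂)
    (hax : fdot a x₂ ≤ c₁) (hay : c₁ ≤ fdot a y₂) : False := by
  set q := fcross a b with hqdef
  set s := fcross u b with hsdef
  have hqne : q ≠ 0 := by
    intro h0; rw [h0] at hq; simp at hq
  obtain ⟨p, hap, hbp⟩ := line_inter (c₁ := c₁) (c₂ := c₂) hqne
  set α := fdot (-b.2, b.1) (x₂ - p) with hα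
  set β := fdot (-b.2, b.1) (y₂ - p) with hβ
  have hdx : x₂ = p + α • ((-b.2, b.1) : ℝ × ℝ) := decomp hb (hbx.trans hbp.symm)
  have hdy : y₂ = p + β • ((-b.2, b.1) : ℝ × ℝ) := decomp hb (hby.trans hbp.symm)
  have haJb : fdot a ((-b.2, b.1) : ℝ × ℝ) = -q := by
    simp only [fdot, fcross, hqdef]; ring
  have huJb : fdot u ((-b.2, b.1) : ℝ × ℝ) = -s := by
    simp only [fdot, fcross, hsdef]; ring
  have e1 : fdot a x₂ = c₁ - α * q := by
    rw [hdx, fdot_add_smul, hap, haJb]; ring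
  have e2 : fdot a y₂ = c₁ - β * q := by
    rw [hdy, fdot_add_smul, hap, haJb]; ring
  have e3 : fdot u x₂ = fdot u p - α * s := by
    rw [hdx, fdot_add_smul, huJb]; ring
  have e4 : fdot u y₂ = fdot u p - β * s := by
    rw [hdy, fdot_add_smul, huJb]; ring
  have hαq : 0 ≤ α * q := by nlinarith [hax, e1]
  have hβq : β * q ≤ 0 := by nlinarith [hay, e2]
  have hq2 : 0 < q^2 := by positivity
  have hαs : 0 ≤ α * s := by
    by_contra hneg
    push_neg at hneg
    nlinarith [mul_nonneg hαq hq.le, hneg, hq2]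
  have hβs : β * s ≤ 0 := by
    by_contra hneg
    push_neg at hneg
    nlinarith [mul_nonneg (neg_nonneg.mpr hβq) hq.le, hneg, hq2]
  have l1 : m ≤ fdot u p := by rw [e3] at hx2m; linarith
  have l2 : fdot u p ≤ M := by rw [e4] at hy2M; linarith
  linarith

lemma outer_aux {H₁ H₂ : Set (ℝ × ℝ)} {u a b : ℝ × ℝ} {m M c₁ c₂ : ℝ}
    {x₁ y₁ x₂ y₂ : ℝ × ℝ}
    (hdisj : Disjoint H₁ H₂) (hv₁ : Convex ℝ H₁) (hv₂ : Convex ℝ H₂)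
    (ha : a.1^2 + a.2^2 = 1) (hb : b.1^2 + b.2^2 = 1)
    (hMm : M < m)
    (hsa : 0 < fcross u a) (hsb : 0 < fcross u b) (hq : 0 < fcross a b)
    (hx₁ : x₁ ∈ H₁) (hy₁ : y₁ ∈ H₂) (hx₂ : x₂ ∈ H₁) (hy₂ : y₂ ∈ H₂)
    (hx1m : m ≤ fdot u x₁) (hx2m : m ≤ fdot u x₂)
    (hy1M : fdot u y₁ ≤ M) (hy2M : fdot u y₂ ≤ M)
    (ha1 : fdot a x₁ = c₁) (ha2 : fdot a y₁ = c₁)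
    (hb1 : fdot b x₂ = c₂) (hb2 : fdot b y₂ = c₂)
    (hax2 : fdot a x₂ ≤ c₁) (hay2 : fdot a y₂ ≤ c₁)
    (hbx1 : fdot b x₁ ≤ c₂) (hby1 : fdot b y₁ ≤ c₂) : False := by
  obtain ⟨p, hap, hbp⟩ := line_inter (c₁ := c₁) (c₂ := c₂) (ne_of_gt hq)
  obtain ⟨α₁, hα₁⟩ : ∃ t : ℝ, t = fdot (-a.2, a.1) (x₁ - p) := ⟨_, rfl⟩
  obtain ⟨β₁, hβ₁⟩ : ∃ t : ℝ, t = fdot (-a.2, a.1) (y₁ - p) := ⟨_, rfl⟩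
  obtain ⟨α₂, hα₂⟩ : ∃ t : ℝ, t = fdot (-b.2, b.1) (x₂ - p) := ⟨_, rfl⟩
  obtain ⟨β₂, hβ₂⟩ : ∃ t : ℝ, t = fdot (-b.2, b.1) (y₂ - p) := ⟨_, rfl⟩
  have hdx1 : x₁ = p + α₁ • ((-a.2, a.1) : ℝ × ℝ) := by
    rw [hα₁]; exact decomp ha (ha1.trans hap.symm)
  have hdy1 : y₁ = p + β₁ • ((-a.2, a.1) : ℝ × ℝ) := by
    rw [hβ₁]; exact decomp ha (ha2.trans hap.symm)
  have hdx2 : x₂ = p + α₂ • ((-b.2, b.1) : ℝ × ℝ) := by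
    rw [hα₂]; exact decomp hb (hb1.trans hbp.symm)
  have hdy2 : y₂ = p + β₂ • ((-b.2, b.1) : ℝ × ℝ) := by
    rw [hβ₂]; exact decomp hb (hb2.trans hbp.symm)
  have hbJa : fdot b ((-a.2, a.1) : ℝ × ℝ) = fcross a b := by simp only [fdot, fcross]; ring
  have haJb : fdot a ((-b.2, b.1) : ℝ × ℝ) = -fcross a b := by simp only [fdot, fcross]; ring
  have huJa : fdot u ((-a.2, a.1) : ℝ × ℝ) = -fcross u a := by simp only [fdot, fcross]; ring
  have huJb : fdot u ((-b.2, b.1) : ℝ × ℝ) = -fcross u b := by simp only [fdot, fcross]; ring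
  have hα₁0 : α₁ ≤ 0 := by
    have h' := hbx1
    rw [hdx1, fdot_add_smul, hbp, hbJa] at h'
    by_contra hcon
    push_neg at hcon
    nlinarith [mul_pos hcon hq]
  have hβ₁0 : β₁ ≤ 0 := by
    have h' := hby1
    rw [hdy1, fdot_add_smul, hbp, hbJa] at h'
    by_contra hcon
    push_neg at hcon
    nlinarith [mul_pos hcon hq]
  have hα₂0 : 0 ≤ α₂ := by
    have h' := hax2
    rw [hdx2, fdot_add_smul, hap, haJb] at h'
    by_contra hcon
    push_neg at hcon
    nlinarith [mul_pos (neg_pos.mpr hcon) hq]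
  have hβ₂0 : 0 ≤ β₂ := by
    have h' := hay2
    rw [hdy2, fdot_add_smul, hap, haJb] at h'
    by_contra hcon
    push_neg at hcon
    nlinarith [mul_pos (neg_pos.mpr hcon) hq]
  have hord1 : α₁ < β₁ := by
    rw [hdx1, fdot_add_smul, huJa] at hx1m
    rw [hdy1, fdot_add_smul, huJa] at hy1M
    by_contra hcon
    push_neg at hcon
    nlinarith [mul_nonneg (sub_nonneg.mpr hcon) hsa.le]
  have hord2 : α₂ < β₂ := by
    rw [hdx2, fdot_add_smul, huJb] at hx2m
    rw [hdy2, fdot_add_smul, huJb] at hy2M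
    by_contra hcon
    push_neg at hcon
    nlinarith [mul_nonneg (sub_nonneg.mpr hcon) hsb.le]
  have hβ₂pos : 0 < β₂ := lt_of_le_of_lt hα₂0 hord2
  have hprod : 0 ≤ β₁ * (α₂ - β₂) := by
    have h2 := mul_nonneg (neg_nonneg.2 hβ₁0) (neg_nonneg.2 (by linarith : α₂ - β₂ ≤ 0))
    rw [neg_mul_neg] at h2
    exact h2
  obtain ⟨E, hE⟩ : ∃ t : ℝ, t = β₂ * (β₁ - α₁) + β₁ * (α₂ - β₂) := ⟨_, rfl⟩
  have hEpos : 0 < E := by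
    rw [hE]
    nlinarith [mul_pos hβ₂pos (sub_pos.mpr hord1)]
  obtain ⟨lam, hlam⟩ : ∃ t : ℝ, t = β₂ * (β₁ - α₁) / E := ⟨_, rfl⟩
  obtain ⟨mu, hmu⟩ : ∃ t : ℝ, t = α₂ * (β₁ - α₁) / E := ⟨_, rfl⟩
  have hlam0 : 0 < lam := by
    rw [hlam]
    exact div_pos (mul_pos hβ₂pos (sub_pos.mpr hord1)) hEpos
  have hlam1 : lam ≤ 1 := by
    rw [hlam, div_le_one hEpos, hE]
    nlinarith
  have hmu0 : 0 ≤ mu := by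
    rw [hmu]
    exact div_nonneg (mul_nonneg hα₂0 (by linarith)) hEpos.le
  have hmu1 : mu ≤ 1 := by
    rw [hmu, div_le_one hEpos, hE]
    nlinarith [mul_nonneg (neg_nonneg.2 hα₁0) (sub_pos.mpr hord2).le]
  have hEne : E ≠ 0 := hEpos.ne'
  have key2 : lam * α₂ = mu * β₂ := by
    rw [hlam, hmu]
    field_simp
  have key1 : (1 - lam) * α₁ = (1 - mu) * β₁ := by
    rw [hlam, hmu]
    field_simp
    rw [hE]
    ring
  have hz₁ : (1 - lam) • x₁ + lam • x₂ ∈ H₁ := hv₁ hx₁ hx₂ (by linarith) hlam0.le (by ring)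
  have hz₂ : (1 - mu) • y₁ + mu • y₂ ∈ H₂ := hv₂ hy₁ hy₂ (by linarith) hmu0 (by ring)
  have heq : (1 - lam) • x₁ + lam • x₂ = (1 - mu) • y₁ + mu • y₂ := by
    rw [hdx1, hdx2, hdy1, hdy2]
    apply Prod.ext <;>
      simp only [Prod.fst_add, Prod.snd_add, Prod.smul_fst, Prod.smul_snd, smul_eq_mul]
    · linear_combination (-a.2) * key1 + (-b.2) * key2
    · linear_combination a.1 * key1 + b.1 * key2
  exact Set.disjoint_left.mp hdisj hz₁ (heq ▸ hz₂)

lemma fspt_cont {H : Set (ℝ × ℝ)} (hc : IsCompact H) : Continuous (fspt H) := by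
  apply hc.continuous_sSup (f := fun a x => fdot a x)
  unfold Function.HasUncurry.uncurry fdot
  fun_prop

lemma exists_sep {H₁ H₂ : Set (ℝ × ℝ)} (hdisj : Disjoint H₁ H₂)
    (hc₁ : IsCompact H₁) (hc₂ : IsCompact H₂)
    (hv₁ : Convex ℝ H₁) (hv₂ : Convex ℝ H₂)
    (hne₁ : H₁.Nonempty) (hne₂ : H₂.Nonempty) :
    ∃ (u : ℝ × ℝ) (m M : ℝ), u.1^2 + u.2^2 = 1 ∧ M < m ∧
      (∀ x ∈ H₁, m ≤ fdot u x) ∧ (∀ y ∈ H₂, fdot u y ≤ M) := by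
  obtain ⟨f, s, t, hfs, hst, hft⟩ :=
    geometric_hahn_banach_compact_closed hv₂ hc₂ hv₁ hc₁.isClosed hdisj.symm
  set w : ℝ × ℝ := (f (1, 0), f (0, 1)) with hw
  have hfw : ∀ x : ℝ × ℝ, f x = fdot w x := by
    intro x
    have hx : x = x.1 • ((1 : ℝ), (0 : ℝ)) + x.2 • ((0 : ℝ), (1 : ℝ)) := by
      apply Prod.ext <;> simp
    nth_rewrite 1 [hx]
    simp only [map_add, map_smul, smul_eq_mul, fdot, hw]
    ring
  have hwne : w ≠ 0 := by
    intro h0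
    obtain ⟨x, hx⟩ := hne₁
    obtain ⟨y, hy⟩ := hne₂
    have h1 := hft x hx
    have h2 := hfs y hy
    rw [hfw, h0] at h1 h2
    simp [fdot] at h1 h2
    linarith
  have hn : 0 < w.1^2 + w.2^2 := nsq_pos hwne
  set n := Real.sqrt (w.1^2 + w.2^2) with hndef
  have hnpos : 0 < n := Real.sqrt_pos.mpr hn
  have hnsq : n^2 = w.1^2 + w.2^2 := Real.sq_sqrt hn.le
  have hkey : ∀ x : ℝ × ℝ, fdot (w.1/n, w.2/n) x = fdot w x / n := by
    intro x; simp only [fdot]; field_simp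
  refine ⟨(w.1/n, w.2/n), t/n, s/n, ?_, ?_, ?_, ?_⟩
  · field_simp
    linarith [hnsq]
  · exact (div_lt_div_iff_of_pos_right hnpos).mpr hst
  · intro x hx
    rw [hkey]
    exact (div_le_div_iff_of_pos_right hnpos).mpr (hfw x ▸ hft x hx).le
  · intro y hy
    rw [hkey]
    exact (div_le_div_iff_of_pos_right hnpos).mpr (hfw y ▸ hfs y hy).le

def rotA (u : ℝ × ℝ) (θ : ℝ) : ℝ × ℝ :=
  (Real.cos θ * u.1 - Real.sin θ * u.2, Real.cos θ * u.2 + Real.sin θ * u.1)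

lemma rotA_cont (u : ℝ × ℝ) : Continuous (rotA u) := by
  unfold rotA; fun_prop

lemma rotA_unit {u : ℝ × ℝ} (hu : u.1^2 + u.2^2 = 1) (θ : ℝ) :
    (rotA u θ).1^2 + (rotA u θ).2^2 = 1 := by
  simp only [rotA]
  have h := Real.sin_sq_add_cos_sq θ
  nlinarith [h, hu]

lemma rotA_zero (u : ℝ × ℝ) : rotA u 0 = u := by
  simp [rotA]

lemma rotA_pi (u : ℝ × ℝ) : rotA u Real.pi = -u := by
  apply Prod.ext <;> simp [rotA]

lemma rotA_two_pi (u : ℝ × ℝ) : rotA u (2 * Real.pi) = u := by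
  simp [rotA, Real.cos_two_pi, Real.sin_two_pi]

lemma fcross_rotA {u : ℝ × ℝ} (hu : u.1^2 + u.2^2 = 1) (θ : ℝ) :
    fcross u (rotA u θ) = Real.sin θ := by
  simp only [fcross, rotA]
  linear_combination (Real.sin θ) * hu

lemma ivt_zero {F : ℝ → ℝ} {t₀ t₁ : ℝ} (hF : Continuous F) (hlt : t₀ < t₁)
    (h0 : 0 < F t₀) (h1 : F t₁ < 0) : ∃ θ ∈ Ioo t₀ t₁, F θ = 0 := by
  have := intermediate_value_Ioo' hlt.le hF.continuousOn (a := t₀) (b := t₁)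
  obtain ⟨θ, hθ, hθ0⟩ := this ⟨h1, h0⟩
  exact ⟨θ, hθ, hθ0⟩

lemma fcross_swap (a b : ℝ × ℝ) : fcross b a = -fcross a b := by
  simp only [fcross]; ring

lemma fcross_neg_left (u a : ℝ × ℝ) : fcross (-u) a = -fcross u a := by
  simp only [fcross, Prod.fst_neg, Prod.snd_neg]; ring

lemma fcross_neg_right (u a : ℝ × ℝ) : fcross u (-a) = -fcross u a := by
  simp only [fcross, Prod.fst_neg, Prod.snd_neg]; ring

lemma neg_unit {u : ℝ × ℝ} (hu : u.1^2 + u.2^2 = 1) : (-u).1^2 + (-u).2^2 = 1 := by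
  simp only [Prod.fst_neg, Prod.snd_neg]
  nlinarith [hu]

def OuterAt (H₁ H₂ : Set (ℝ × ℝ)) (a : ℝ × ℝ) (c : ℝ) : Prop :=
  (∀ x ∈ H₁, fdot a x ≤ c) ∧ (∀ y ∈ H₂, fdot a y ≤ c) ∧
    (∃ x ∈ H₁, fdot a x = c) ∧ (∃ y ∈ H₂, fdot a y = c)

def InnerAt (H₁ H₂ : Set (ℝ × ℝ)) (a : ℝ × ℝ) (c : ℝ) : Prop :=
  (∀ x ∈ H₁, fdot a x ≤ c) ∧ (∀ y ∈ H₂, c ≤ fdot a y) ∧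
    (∃ x ∈ H₁, fdot a x = c) ∧ (∃ y ∈ H₂, fdot a y = c)

lemma outer_unique_pos {H₁ H₂ : Set (ℝ × ℝ)} {u a b : ℝ × ℝ} {m M c₁ c₂ : ℝ}
    (hdisj : Disjoint H₁ H₂) (hv₁ : Convex ℝ H₁) (hv₂ : Convex ℝ H₂)
    (hMm : M < m)
    (hsep1 : ∀ x ∈ H₁, m ≤ fdot u x) (hsep2 : ∀ y ∈ H₂, fdot u y ≤ M)
    (ha : a.1^2 + a.2^2 = 1) (hb : b.1^2 + b.2^2 = 1)
    (hsa : 0 < fcross u a) (hsb : 0 < fcross u b)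
    (hA : OuterAt H₁ H₂ a c₁) (hB : OuterAt H₁ H₂ b c₂) : a = b := by
  by_contra hne
  obtain ⟨hA1, hA2, ⟨x₁, hx₁, hax1⟩, ⟨y₁, hy₁, hay1⟩⟩ := hA
  obtain ⟨hB1, hB2, ⟨x₂, hx₂, hbx2⟩, ⟨y₂, hy₂, hby2⟩⟩ := hB
  have hq0 : fcross a b ≠ 0 := by
    intro h0
    rcases cross_eq_zero ha hb h0 with h | h
    · exact hne h.symm
    · rw [h, fcross_neg_right] at hsb; linarith
  rcases lt_or_gt_of_ne hq0 with hq | hq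
  · have hq' : 0 < fcross b a := by rw [fcross_swap]; linarith
    exact outer_aux hdisj hv₁ hv₂ hb ha hMm hsb hsa hq'
      hx₂ hy₂ hx₁ hy₁ (hsep1 x₂ hx₂) (hsep1 x₁ hx₁) (hsep2 y₂ hy₂) (hsep2 y₁ hy₁)
      hbx2 hby2 hax1 hay1 (hB1 x₁ hx₁) (hB2 y₁ hy₁) (hA1 x₂ hx₂) (hA2 y₂ hy₂)
  · exact outer_aux hdisj hv₁ hv₂ ha hb hMm hsa hsb hq
      hx₁ hy₁ hx₂ hy₂ (hsep1 x₁ hx₁) (hsep1 x₂ hx₂) (hsep2 y₁ hy₁) (hsep2 y₂ hy₂)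
      hax1 hay1 hbx2 hby2 (hA1 x₂ hx₂) (hA2 y₂ hy₂) (hB1 x₁ hx₁) (hB2 y₁ hy₁)

lemma OuterAt.swap {H₁ H₂ : Set (ℝ × ℝ)} {a : ℝ × ℝ} {c : ℝ}
    (h : OuterAt H₁ H₂ a c) : OuterAt H₂ H₁ a c :=
  ⟨h.2.1, h.1, h.2.2.2, h.2.2.1⟩

lemma outer_unique_neg {H₁ H₂ : Set (ℝ × ℝ)} {u a b : ℝ × ℝ} {m M c₁ c₂ : ℝ}
    (hdisj : Disjoint H₁ H₂) (hv₁ : Convex ℝ H₁) (hv₂ : Convex ℝ H₂)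
    (hMm : M < m)
    (hsep1 : ∀ x ∈ H₁, m ≤ fdot u x) (hsep2 : ∀ y ∈ H₂, fdot u y ≤ M)
    (ha : a.1^2 + a.2^2 = 1) (hb : b.1^2 + b.2^2 = 1)
    (hsa : fcross u a < 0) (hsb : fcross u b < 0)
    (hA : OuterAt H₁ H₂ a c₁) (hB : OuterAt H₁ H₂ b c₂) : a = b := by
  apply outer_unique_pos (u := -u) (m := -M) (M := -m) hdisj.symm hv₂ hv₁
    (by linarith) ?_ ?_ ha hb ?_ ?_ hA.swap hB.swap
  · intro x hx; rw [fdot_neg]; linarith [hsep2 x hx]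
  · intro y hy; rw [fdot_neg]; linarith [hsep1 y hy]
  · rw [fcross_neg_left]; linarith
  · rw [fcross_neg_left]; linarith

lemma inner_unique {H₁ H₂ : Set (ℝ × ℝ)} {u a b : ℝ × ℝ} {m M c₁ c₂ : ℝ}
    (hMm : M < m)
    (hsep1 : ∀ x ∈ H₁, m ≤ fdot u x) (hsep2 : ∀ y ∈ H₂, fdot u y ≤ M)
    (ha : a.1^2 + a.2^2 = 1) (hb : b.1^2 + b.2^2 = 1)
    (hss : 0 < fcross u a * fcross u b)
    (hA : InnerAt H₁ H₂ a c₁) (hB : InnerAt H₁ H₂ b c₂) : a = b := by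
  by_contra hne
  obtain ⟨hA1, hA2, ⟨x₁, hx₁, hax1⟩, ⟨y₁, hy₁, hay1⟩⟩ := hA
  obtain ⟨hB1, hB2, ⟨x₂, hx₂, hbx2⟩, ⟨y₂, hy₂, hby2⟩⟩ := hB
  have hsa0 : fcross u a ≠ 0 := by
    intro h0; rw [h0, zero_mul] at hss; exact lt_irrefl 0 hss
  have hsb0 : fcross u b ≠ 0 := by
    intro h0; rw [h0, mul_zero] at hss; exact lt_irrefl 0 hss
  have hq0 : fcross a b ≠ 0 := by
    intro h0
    rcases cross_eq_zero ha hb h0 with h | h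
    · exact hne h.symm
    · rw [h, fcross_neg_right] at hss
      nlinarith [hss, sq_nonneg (fcross u a)]
  rcases lt_or_gt_of_ne (mul_ne_zero hq0 hsb0) with hq | hq
  · -- use the swapped pair (b, a)
    have hq' : 0 < fcross b a * fcross u a := by
      rw [fcross_swap]
      have hsb2 : 0 < (fcross u b)^2 := by positivity
      nlinarith [hq, hss, hsb2]
    exact inner_aux ha hMm hq' (hsep1 x₁ hx₁) (hsep2 y₁ hy₁) hax1 hay1
      (hB1 x₁ hx₁) (hB2 y₁ hy₁)
  · exact inner_aux hb hMm hq (hsep1 x₂ hx₂) (hsep2 y₂ hy₂) hbx2 hby2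
      (hA1 x₂ hx₂) (hA2 y₂ hy₂)

def lineOf (H₁ : Set (ℝ × ℝ)) (a : ℝ × ℝ) : Set (ℝ × ℝ) :=
  {x : ℝ × ℝ | fdot a x = fspt H₁ a}

lemma isSupportingLine_iff (L H : Set (ℝ × ℝ)) :
    IsSupportingLine L H ↔ ∃ (a : ℝ × ℝ) (c : ℝ), a ≠ 0 ∧
      L = {x : ℝ × ℝ | fdot a x = c} ∧ (∀ x ∈ H, fdot a x ≤ c) ∧ (L ∩ H).Nonempty :=
  Iff.rfl

lemma mem_S_H₁ {H₁ : Set (ℝ × ℝ)} (hc₁ : IsCompact H₁) (hne₁ : H₁.Nonempty)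
    {a : ℝ × ℝ} (ha : a.1^2 + a.2^2 = 1) :
    IsSupportingLine (lineOf H₁ a) H₁ := by
  rw [isSupportingLine_iff]
  refine ⟨a, fspt H₁ a, unit_ne_zero ha, rfl, fun x hx => fspt_le hc₁ hx a, ?_⟩
  obtain ⟨x, hx, he⟩ := fspt_mem hc₁ hne₁ a
  exact ⟨x, he, hx⟩

lemma mem_S_outer {H₁ H₂ : Set (ℝ × ℝ)} (hc₂ : IsCompact H₂) (hne₂ : H₂.Nonempty)
    {a : ℝ × ℝ} (ha : a.1^2 + a.2^2 = 1) (hf : fspt H₂ a = fspt H₁ a) :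
    IsSupportingLine (lineOf H₁ a) H₂ := by
  rw [isSupportingLine_iff]
  refine ⟨a, fspt H₁ a, unit_ne_zero ha, rfl, ?_, ?_⟩
  · intro y hy
    rw [← hf]
    exact fspt_le hc₂ hy a
  · obtain ⟨y, hy, he⟩ := fspt_mem hc₂ hne₂ a
    exact ⟨y, show fdot a y = fspt H₁ a by rw [he, hf], hy⟩

lemma mem_S_inner {H₁ H₂ : Set (ℝ × ℝ)} (hc₂ : IsCompact H₂) (hne₂ : H₂.Nonempty)
    {a : ℝ × ℝ} (ha : a.1^2 + a.2^2 = 1) (hg : fspt H₂ (-a) = -(fspt H₁ a)) :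
    IsSupportingLine (lineOf H₁ a) H₂ := by
  rw [isSupportingLine_iff]
  refine ⟨-a, -(fspt H₁ a), fun h0 => unit_ne_zero ha (by
    have := congrArg Neg.neg h0
    simpa using this), ?_, ?_, ?_⟩
  · ext x
    simp only [lineOf, mem_setOf_eq, fdot_neg]
    constructor <;> intro h <;> linarith
  · intro y hy
    rw [← hg]
    exact fspt_le hc₂ hy (-a)
  · obtain ⟨y, hy, he⟩ := fspt_mem hc₂ hne₂ (-a)
    refine ⟨y, ?_, hy⟩
    rw [lineOf, mem_setOf_eq]
    rw [fdot_neg] at he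
    rw [hg] at he
    linarith [he]

lemma support_char {H₁ H₂ : Set (ℝ × ℝ)} (hc₁ : IsCompact H₁) (hc₂ : IsCompact H₂)
    {L : Set (ℝ × ℝ)} (h1 : IsSupportingLine L H₁) (h2 : IsSupportingLine L H₂) :
    ∃ a : ℝ × ℝ, a.1^2 + a.2^2 = 1 ∧ L = lineOf H₁ a ∧
      (fspt H₂ a = fspt H₁ a ∨ fspt H₂ (-a) = -(fspt H₁ a)) := by
  -- normalize a supporting line presentation
  have norm : ∀ (H : Set (ℝ × ℝ)), IsCompact H → IsSupportingLine L H →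
      ∃ a : ℝ × ℝ, a.1^2 + a.2^2 = 1 ∧ L = {x | fdot a x = fspt H a} := by
    intro H hc hsl
    rw [isSupportingLine_iff] at hsl
    obtain ⟨a₀, c₀, ha₀, hL, hhalf, ⟨z, hzL, hzH⟩⟩ := hsl
    have hn0 : 0 < a₀.1^2 + a₀.2^2 := nsq_pos ha₀
    set n := Real.sqrt (a₀.1^2 + a₀.2^2) with hndef
    have hnpos : 0 < n := Real.sqrt_pos.mpr hn0
    have hnsq : n^2 = a₀.1^2 + a₀.2^2 := Real.sq_sqrt hn0.le
    set a : ℝ × ℝ := (a₀.1/n, a₀.2/n) with hadef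
    have haU : a.1^2 + a.2^2 = 1 := by
      rw [hadef]
      field_simp
      linarith [hnsq]
    have hkey : ∀ x : ℝ × ℝ, fdot a x = fdot a₀ x / n := by
      intro x; rw [hadef]; simp only [fdot]; field_simp
    have hz0 : fdot a₀ z = c₀ := by
      rw [hL] at hzL
      exact hzL
    have hsptH : fspt H a = c₀ / n := by
      apply fspt_eq hc
      · intro x hx
        rw [hkey]
        exact (div_le_div_iff_of_pos_right hnpos).mpr (hhalf x hx)
      · exact ⟨z, hzH, by rw [hkey, hz0]⟩
    refine ⟨a, haU, ?_⟩
    rw [hL]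
    ext x
    simp only [mem_setOf_eq, hsptH, hkey]
    constructor
    · intro h; rw [h]
    · intro h
      rw [div_eq_div_iff hnpos.ne' hnpos.ne'] at h
      exact mul_right_cancel₀ hnpos.ne' h
  obtain ⟨a, haU, hLa⟩ := norm H₁ hc₁ h1
  obtain ⟨b, hbU, hLb⟩ := norm H₂ hc₂ h2
  have heq : {x : ℝ × ℝ | fdot a x = fspt H₁ a} = {x | fdot b x = fspt H₂ b} := by
    rw [← hLa, ← hLb]
  obtain ⟨l, hl0, hba, hcd⟩ := line_eq_iff (unit_ne_zero haU) (unit_ne_zero hbU) heq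
  have hl2 : (l - 1) * (l + 1) = 0 := by
    have : b.1^2 + b.2^2 = l^2 * (a.1^2 + a.2^2) := by
      rw [hba]
      simp only [Prod.smul_fst, Prod.smul_snd, smul_eq_mul]
      ring
    rw [haU, hbU] at this
    linear_combination -this
  rcases mul_eq_zero.mp hl2 with h | h
  · have hl1 : l = 1 := by linarith
    rw [hl1, one_smul] at hba
    rw [hl1, one_mul] at hcd
    rw [hba] at hcd
    exact ⟨a, haU, hLa, Or.inl hcd⟩
  · have hl1 : l = -1 := by linarith
    rw [hl1, neg_one_smul] at hba
    rw [hl1, neg_one_mul] at hcd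
    refine ⟨a, haU, hLa, Or.inr ?_⟩
    rw [← hba, hcd]

lemma lineOf_inj {H₁ : Set (ℝ × ℝ)} (hc₁ : IsCompact H₁) (hi₁ : (interior H₁).Nonempty)
    {a b : ℝ × ℝ} (ha : a.1^2 + a.2^2 = 1) (hb : b.1^2 + b.2^2 = 1)
    (h : lineOf H₁ a = lineOf H₁ b) : a = b := by
  obtain ⟨l, hl0, hba, hcd⟩ := line_eq_iff (unit_ne_zero ha) (unit_ne_zero hb) h
  have hl2 : (l - 1) * (l + 1) = 0 := by
    have : b.1^2 + b.2^2 = l^2 * (a.1^2 + a.2^2) := by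
      rw [hba]
      simp only [Prod.smul_fst, Prod.smul_snd, smul_eq_mul]
      ring
    rw [ha, hb] at this
    linear_combination -this
  rcases mul_eq_zero.mp hl2 with h' | h'
  · have hl1 : l = 1 := by linarith
    rw [hl1, one_smul] at hba
    exact hba.symm
  · exfalso
    have hl1 : l = -1 := by linarith
    rw [hl1, neg_one_smul] at hba
    rw [hl1, neg_one_mul] at hcd
    have hw := width_pos hc₁ hi₁ (unit_ne_zero ha)
    rw [hba] at hcd
    rw [hcd] at hw
    linarith

lemma sin_neg_Ioo {θ : ℝ} (h : θ ∈ Ioo Real.pi (2 * Real.pi)) : Real.sin θ < 0 := by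
  have h1 : 0 < Real.sin (θ - Real.pi) :=
    Real.sin_pos_of_pos_of_lt_pi (by linarith [h.1]) (by linarith [h.2])
  rw [Real.sin_sub_pi] at h1
  linarith

lemma ivt_zero' {F : ℝ → ℝ} {t₀ t₁ : ℝ} (hF : Continuous F) (hlt : t₀ < t₁)
    (h0 : F t₀ < 0) (h1 : 0 < F t₁) : ∃ θ ∈ Ioo t₀ t₁, F θ = 0 := by
  have := intermediate_value_Ioo hlt.le hF.continuousOn (a := t₀) (b := t₁)
  obtain ⟨θ, hθ, hθ0⟩ := this ⟨h0, h1⟩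
  exact ⟨θ, hθ, hθ0⟩

end

end FourTangentsAux

open FourTangentsAux in
/-- Two disjoint compact convex planar sets with nonempty interiors have exactly
four common (non-directed) supporting lines. -/
theorem four_common_supporting_lines
    (H₁ H₂ : Set (ℝ × ℝ)) (hdisj : Disjoint H₁ H₂)
    (hc₁ : IsCompact H₁) (hc₂ : IsCompact H₂)
    (hv₁ : Convex ℝ H₁) (hv₂ : Convex ℝ H₂)
    (hi₁ : (interior H₁).Nonempty) (hi₂ : (interior H₂).Nonempty) :
    {L : Set (ℝ × ℝ) | IsSupportingLine L H₁ ∧ IsSupportingLine L H₂}.ncard = 4 := by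
  classical
  have hne₁ : H₁.Nonempty := ⟨hi₁.choose, interior_subset hi₁.choose_spec⟩
  have hne₂ : H₂.Nonempty := ⟨hi₂.choose, interior_subset hi₂.choose_spec⟩
  obtain ⟨u, m, M, hu, hMm, hsep1, hsep2⟩ := exists_sep hdisj hc₁ hc₂ hv₁ hv₂ hne₁ hne₂
  -- support function values in the separating direction
  have h1u : m ≤ fspt H₁ u := by
    obtain ⟨x, hx, he⟩ := fspt_mem hc₁ hne₁ u
    rw [← he]; exact hsep1 x hx
  have h2u : fspt H₂ u ≤ M := by
    obtain ⟨y, hy, he⟩ := fspt_mem hc₂ hne₂ u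
    rw [← he]; exact hsep2 y hy
  have h1u' : fspt H₁ (-u) ≤ -m := by
    obtain ⟨x, hx, he⟩ := fspt_mem hc₁ hne₁ (-u)
    rw [← he, fdot_neg]; linarith [hsep1 x hx]
  have h2u' : -M ≤ fspt H₂ (-u) := by
    obtain ⟨y, hy⟩ := hne₂
    have h := fspt_le hc₂ hy (-u)
    rw [fdot_neg] at h
    linarith [hsep2 y hy]
  -- the two angle functions
  set F : ℝ → ℝ := fun θ => fspt H₁ (rotA u θ) - fspt H₂ (rotA u θ) with hFdef
  set G : ℝ → ℝ := fun θ => fspt H₁ (rotA u θ) + fspt H₂ (-(rotA u θ)) with hGdef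
  have hFc : Continuous F :=
    ((fspt_cont hc₁).comp (rotA_cont u)).sub ((fspt_cont hc₂).comp (rotA_cont u))
  have hGc : Continuous G :=
    ((fspt_cont hc₁).comp (rotA_cont u)).add
      ((fspt_cont hc₂).comp (continuous_neg.comp (rotA_cont u)))
  have hF0 : 0 < F 0 := by simp only [hFdef, rotA_zero]; linarith
  have hFπ : F Real.pi < 0 := by simp only [hFdef, rotA_pi]; linarith
  have hF2π : 0 < F (2 * Real.pi) := by simp only [hFdef, rotA_two_pi]; linarith
  have hG0 : 0 < G 0 := by simp only [hGdef, rotA_zero]; linarith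
  have hGπ : G Real.pi < 0 := by simp only [hGdef, rotA_pi, neg_neg]; linarith
  have hG2π : 0 < G (2 * Real.pi) := by simp only [hGdef, rotA_two_pi]; linarith
  have hπ2π : Real.pi < 2 * Real.pi := by linarith [Real.pi_pos]
  obtain ⟨θ1, hθ1, hFθ1⟩ := ivt_zero hFc Real.pi_pos hF0 hFπ
  obtain ⟨θ2, hθ2, hFθ2⟩ := ivt_zero' hFc hπ2π hFπ hF2π
  obtain ⟨θ3, hθ3, hGθ3⟩ := ivt_zero hGc Real.pi_pos hG0 hGπ
  obtain ⟨θ4, hθ4, hGθ4⟩ := ivt_zero' hGc hπ2π hGπ hG2π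
  set a1 := rotA u θ1 with ha1def
  set a2 := rotA u θ2 with ha2def
  set a3 := rotA u θ3 with ha3def
  set a4 := rotA u θ4 with ha4def
  have hU1 : a1.1^2 + a1.2^2 = 1 := rotA_unit hu θ1
  have hU2 : a2.1^2 + a2.2^2 = 1 := rotA_unit hu θ2
  have hU3 : a3.1^2 + a3.2^2 = 1 := rotA_unit hu θ3
  have hU4 : a4.1^2 + a4.2^2 = 1 := rotA_unit hu θ4
  have hs1 : 0 < fcross u a1 := by
    rw [ha1def, fcross_rotA hu]; exact Real.sin_pos_of_pos_of_lt_pi hθ1.1 hθ1.2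
  have hs2 : fcross u a2 < 0 := by
    rw [ha2def, fcross_rotA hu]; exact sin_neg_Ioo hθ2
  have hs3 : 0 < fcross u a3 := by
    rw [ha3def, fcross_rotA hu]; exact Real.sin_pos_of_pos_of_lt_pi hθ3.1 hθ3.2
  have hs4 : fcross u a4 < 0 := by
    rw [ha4def, fcross_rotA hu]; exact sin_neg_Ioo hθ4
  have hf1 : fspt H₂ a1 = fspt H₁ a1 := by
    simp only [hFdef] at hFθ1; rw [← ha1def] at hFθ1; linarith
  have hf2 : fspt H₂ a2 = fspt H₁ a2 := by
    simp only [hFdef] at hFθ2; rw [← ha2def] at hFθ2; linarith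
  have hg3 : fspt H₂ (-a3) = -(fspt H₁ a3) := by
    simp only [hGdef] at hGθ3; rw [← ha3def] at hGθ3; linarith
  have hg4 : fspt H₂ (-a4) = -(fspt H₁ a4) := by
    simp only [hGdef] at hGθ4; rw [← ha4def] at hGθ4; linarith
  -- tangency data
  have mkOuter : ∀ {a : ℝ × ℝ}, a.1^2 + a.2^2 = 1 → fspt H₂ a = fspt H₁ a →
      OuterAt H₁ H₂ a (fspt H₁ a) := by
    intro a ha hf
    refine ⟨fun x hx => fspt_le hc₁ hx a, fun y hy => ?_, fspt_mem hc₁ hne₁ a, ?_⟩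
    · rw [← hf]; exact fspt_le hc₂ hy a
    · obtain ⟨y, hy, he⟩ := fspt_mem hc₂ hne₂ a
      exact ⟨y, hy, by rw [he, hf]⟩
  have mkInner : ∀ {a : ℝ × ℝ}, a.1^2 + a.2^2 = 1 → fspt H₂ (-a) = -(fspt H₁ a) →
      InnerAt H₁ H₂ a (fspt H₁ a) := by
    intro a ha hg
    refine ⟨fun x hx => fspt_le hc₁ hx a, fun y hy => ?_, fspt_mem hc₁ hne₁ a, ?_⟩
    · have h := fspt_le hc₂ hy (-a)
      rw [fdot_neg, hg] at h
      linarith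
    · obtain ⟨y, hy, he⟩ := fspt_mem hc₂ hne₂ (-a)
      rw [fdot_neg, hg] at he
      exact ⟨y, hy, by linarith⟩
  -- the four candidate lines
  set L1 := lineOf H₁ a1 with hL1def
  set L2 := lineOf H₁ a2 with hL2def
  set L3 := lineOf H₁ a3 with hL3def
  set L4 := lineOf H₁ a4 with hL4def
  have hSeq : {L : Set (ℝ × ℝ) | IsSupportingLine L H₁ ∧ IsSupportingLine L H₂}
      = {L1, L2, L3, L4} := by
    ext L
    simp only [mem_setOf_eq, mem_insert_iff, mem_singleton_iff]
    constructor
    · rintro ⟨hLa1, hLa2⟩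
      obtain ⟨a, haU, hLa, hcase⟩ := support_char hc₁ hc₂ hLa1 hLa2
      have hsu : fcross u a ≠ 0 := by
        intro h0
        rcases cross_eq_zero hu haU h0 with h | h
        · rw [h] at hcase
          rcases hcase with hca | hca <;> linarith
        · rw [h] at hcase
          rw [neg_neg] at hcase
          rcases hcase with hca | hca <;> linarith
      rcases hcase with hf | hg
      · have hOa := mkOuter haU hf
        rcases lt_or_gt_of_ne hsu with hneg | hpos
        · refine Or.inr (Or.inl ?_)
          rw [hLa, hL2def,
            outer_unique_neg hdisj hv₁ hv₂ hMm hsep1 hsep2 haU hU2 hneg hs2 hOa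
              (mkOuter hU2 hf2)]
        · refine Or.inl ?_
          rw [hLa, hL1def,
            outer_unique_pos hdisj hv₁ hv₂ hMm hsep1 hsep2 haU hU1 hpos hs1 hOa
              (mkOuter hU1 hf1)]
      · have hIa := mkInner haU hg
        rcases lt_or_gt_of_ne hsu with hneg | hpos
        · refine Or.inr (Or.inr (Or.inr ?_))
          rw [hLa, hL4def,
            inner_unique hMm hsep1 hsep2 haU hU4
              (mul_pos_of_neg_of_neg hneg hs4) hIa (mkInner hU4 hg4)]
        · refine Or.inr (Or.inr (Or.inl ?_))
          rw [hLa, hL3def,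
            inner_unique hMm hsep1 hsep2 haU hU3
              (mul_pos hpos hs3) hIa (mkInner hU3 hg3)]
    · rintro (rfl | rfl | rfl | rfl)
      · exact ⟨mem_S_H₁ hc₁ hne₁ hU1, mem_S_outer hc₂ hne₂ hU1 hf1⟩
      · exact ⟨mem_S_H₁ hc₁ hne₁ hU2, mem_S_outer hc₂ hne₂ hU2 hf2⟩
      · exact ⟨mem_S_H₁ hc₁ hne₁ hU3, mem_S_inner hc₂ hne₂ hU3 hg3⟩
      · exact ⟨mem_S_H₁ hc₁ hne₁ hU4, mem_S_inner hc₂ hne₂ hU4 hg4⟩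
  -- the four normals, hence the four lines, are pairwise distinct
  have ha12 : a1 ≠ a2 := fun h => by rw [h] at hs1; linarith
  have ha34 : a3 ≠ a4 := fun h => by rw [h] at hs3; linarith
  have ha14 : a1 ≠ a4 := fun h => by rw [h] at hs1; linarith
  have ha23 : a2 ≠ a3 := fun h => by rw [← h] at hs3; linarith
  have ha13 : a1 ≠ a3 := by
    intro h
    have hw2 := width_pos hc₂ hi₂ (unit_ne_zero hU3)
    rw [h] at hf1
    linarith
  have ha24 : a2 ≠ a4 := by
    intro h
    have hw2 := width_pos hc₂ hi₂ (unit_ne_zero hU4)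
    rw [h] at hf2
    linarith
  have hL12 : L1 ≠ L2 := fun h => ha12 (lineOf_inj hc₁ hi₁ hU1 hU2 h)
  have hL13 : L1 ≠ L3 := fun h => ha13 (lineOf_inj hc₁ hi₁ hU1 hU3 h)
  have hL14 : L1 ≠ L4 := fun h => ha14 (lineOf_inj hc₁ hi₁ hU1 hU4 h)
  have hL23 : L2 ≠ L3 := fun h => ha23 (lineOf_inj hc₁ hi₁ hU2 hU3 h)
  have hL24 : L2 ≠ L4 := fun h => ha24 (lineOf_inj hc₁ hi₁ hU2 hU4 h)
  have hL34 : L3 ≠ L4 := fun h => ha34 (lineOf_inj hc₁ hi₁ hU3 hU4 h)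
  rw [hSeq]
  rw [Set.ncard_insert_of_notMem (by simp [hL12, hL13, hL14]),
    Set.ncard_insert_of_notMem (by simp [hL23, hL24]),
    Set.ncard_insert_of_notMem (by simp [hL34]),
    Set.ncard_singleton]
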